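/- Let $G \in \mathbb{R}^{D \times D}$ be invertible, $W \in \mathbb{R}^{D \times D}$ arbitrary, set $A = GG^{\top}$, and for $t > 0$ let $\Sigma(t) = (t^{-1}A^{-1} + t\, W^{\top} W)^{-1}$. Fix $x, y \in \mathbb{R}^{D}$, a vector $f \in \mathbb{R}^{D}$, and define the proposal mean $m(t) = \Sigma(t)\big(t^{-1} A^{-1} x + A^{-1} f + W^{\top} y\big)$. Then $\lim_{t \to 0^{+}} m(t) = x$ and $\lim_{t \to 0^{+}} t^{-1}\big(m(t) - x\big) = f + GG^{\top} W^{\top} y$. Consequently the optimal-proposal mean reduces, to first order in $t$, to $x + f\, t + t\, GG^{\top} W^{\top} y$. -/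

import Mathlib

open Matrix Filter Topology

set_option maxHeartbeats 1000000 in
/-- With `A = G Gᵀ` (`G` invertible), `Σ(t) = (t⁻¹ A⁻¹ + t Wᵀ W)⁻¹`, and
the proposal mean `m(t) = Σ(t) (t⁻¹ A⁻¹ x + A⁻¹ f + Wᵀ y)`, we have `m(t) → x` and
`t⁻¹ (m(t) - x) → f + G Gᵀ Wᵀ y` as `t → 0⁺`. -/
theorem stmt3 {D : ℕ} (G W A : Matrix (Fin D) (Fin D) ℝ) (hG : IsUnit G)
    (hA : A = G * Gᵀ)
    (Sig : ℝ → Matrix (Fin D) (Fin D) ℝ)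
    (hSig : ∀ t : ℝ, 0 < t → Sig t = (t⁻¹ • A⁻¹ + t • (Wᵀ * W))⁻¹)
    (x y f : Fin D → ℝ)
    (m : ℝ → Fin D → ℝ)
    (hm : ∀ t : ℝ, 0 < t →
      m t = (Sig t).mulVec (t⁻¹ • A⁻¹.mulVec x + A⁻¹.mulVec f + Wᵀ.mulVec y)) :
    Tendsto m (𝓝[>] 0) (𝓝 x) ∧
      Tendsto (fun t : ℝ => t⁻¹ • (m t - x)) (𝓝[>] 0)
        (𝓝 (f + (G * Gᵀ * Wᵀ).mulVec y)) := by
  have hAunit : IsUnit A := by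
    rw [hA]
    exact hG.mul ((Matrix.isUnit_iff_isUnit_det Gᵀ).mpr
      (by simpa [Matrix.det_transpose] using (Matrix.isUnit_iff_isUnit_det G).mp hG))
  have hAdet : IsUnit A.det := (Matrix.isUnit_iff_isUnit_det A).mp hAunit
  set B : Matrix (Fin D) (Fin D) ℝ := A * (Wᵀ * W) with hB
  set M : ℝ → Matrix (Fin D) (Fin D) ℝ := fun t => 1 + (t^2) • B with hM
  set c : Fin D → ℝ := (A * Wᵀ).mulVec y with hc
  -- continuity of M and det M
  have hMcont : Continuous M := by
    apply continuous_const.add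
    exact (continuous_pow 2).smul continuous_const
  have hdet : Tendsto (fun t => (M t).det) (𝓝 0) (𝓝 1) := by
    have : Continuous fun t => (M t).det := hMcont.matrix_det
    have h0 : (M 0).det = 1 := by simp [hM]
    simpa [h0] using this.tendsto 0
  -- eventually det M t ≠ 0 and t > 0
  have hdet' : ∀ᶠ t in 𝓝[>] (0:ℝ), (M t).det ≠ 0 :=
    (hdet.mono_left nhdsWithin_le_nhds).eventually_ne one_ne_zero
  have hpos : ∀ᶠ t in 𝓝[>] (0:ℝ), (0:ℝ) < t := eventually_mem_nhdsWithin
  -- key formula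
  have key : ∀ᶠ t in 𝓝[>] (0:ℝ),
      m t = (M t)⁻¹.mulVec (x + t • f + t • c) := by
    filter_upwards [hdet', hpos] with t hdt ht
    have htne : t ≠ 0 := ht.ne'
    have hMunit : IsUnit (M t).det := isUnit_iff_ne_zero.mpr hdt
    have hfac : t⁻¹ • A⁻¹ + t • (Wᵀ * W) = t⁻¹ • (A⁻¹ * M t) := by
      rw [hM]
      simp only [Matrix.mul_add, Matrix.mul_one, Matrix.mul_smul, smul_add]
      rw [hB, ← Matrix.mul_assoc, Matrix.nonsing_inv_mul A hAdet, Matrix.one_mul,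
        smul_smul]
      congr 1
      rw [sq, ← mul_assoc, inv_mul_cancel₀ htne, one_mul]
    have hSigt : Sig t = t • ((M t)⁻¹ * A) := by
      rw [hSig t ht, hfac]
      have hiu : Invertible (t⁻¹ : ℝ) := invertibleOfNonzero (inv_ne_zero htne)
      have hprod : IsUnit (A⁻¹ * M t).det := by
        rw [Matrix.det_mul]
        exact (Matrix.isUnit_nonsing_inv_det A hAdet).mul hMunit
      have h2 := Matrix.inv_smul (A := A⁻¹ * M t) (t⁻¹) hprod
      rw [h2, Matrix.mul_inv_rev, Matrix.nonsing_inv_nonsing_inv A hAdet]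
      congr 1
      simp [invOf_eq_inv]
    rw [hm t ht, hSigt]
    have : (t • ((M t)⁻¹ * A)).mulVec (t⁻¹ • A⁻¹.mulVec x + A⁻¹.mulVec f + Wᵀ.mulVec y)
        = ((M t)⁻¹ * A).mulVec (t • (t⁻¹ • A⁻¹.mulVec x + A⁻¹.mulVec f + Wᵀ.mulVec y)) := by
      simp [Matrix.smul_mulVec, Matrix.mulVec_add, Matrix.mulVec_smul, smul_add,
        smul_smul, mul_inv_cancel₀ htne, inv_mul_cancel₀ htne]
    rw [this]
    have hv : t • (t⁻¹ • A⁻¹.mulVec x + A⁻¹.mulVec f + Wᵀ.mulVec y)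
        = A⁻¹.mulVec x + t • A⁻¹.mulVec f + t • Wᵀ.mulVec y := by
      rw [smul_add, smul_add, smul_smul, mul_inv_cancel₀ htne, one_smul]
    rw [hv, ← Matrix.mulVec_mulVec]
    simp only [Matrix.mulVec_add, Matrix.mulVec_smul, Matrix.mulVec_mulVec,
      Matrix.mul_nonsing_inv A hAdet, Matrix.one_mulVec, hc]
  -- continuity of the inverse at 0
  have hFtend : Tendsto (fun t => (M t)⁻¹) (𝓝 (0:ℝ)) (𝓝 1) := by
    have hinv : ContinuousAt Ring.inverse ((M 0).det) := by
      rw [Ring.inverse_eq_inv']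
      have h0 : (M 0).det = 1 := by simp [hM]
      rw [h0]
      exact continuousAt_inv₀ one_ne_zero
    have h1 : ContinuousAt Inv.inv (M 0) := continuousAt_matrix_inv _ hinv
    have h2 : Tendsto (fun t => (M t)⁻¹) (𝓝 0) (𝓝 ((M 0)⁻¹)) :=
      h1.tendsto.comp hMcont.continuousAt
    have h3 : (M 0)⁻¹ = 1 := by simp [hM]
    rwa [h3] at h2
  -- continuity of mulVec as a joint map
  have hg : Continuous fun p : Matrix (Fin D) (Fin D) ℝ × (Fin D → ℝ) => p.1.mulVec p.2 :=
    Continuous.matrix_mulVec continuous_fst continuous_snd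
  constructor
  · -- first limit
    have hv : Tendsto (fun t : ℝ => x + t • f + t • c) (𝓝 0) (𝓝 x) := by
      have : Continuous fun t : ℝ => x + t • f + t • c := by continuity
      simpa using this.tendsto 0
    have hlim : Tendsto (fun t => (M t)⁻¹.mulVec (x + t • f + t • c)) (𝓝 (0:ℝ)) (𝓝 x) := by
      have := hg.continuousAt.tendsto.comp (hFtend.prodMk_nhds hv)
      simpa [Matrix.one_mulVec, Function.comp_def] using this
    exact (hlim.mono_left nhdsWithin_le_nhds).congr' (key.mono fun t h => h.symm)
  · -- second limit
    have key2 : ∀ᶠ t in 𝓝[>] (0:ℝ),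
        t⁻¹ • (m t - x) = (M t)⁻¹.mulVec (f + c) - t • (((M t)⁻¹ * B).mulVec x) := by
      filter_upwards [key, hdet', hpos] with t hkey hdt ht
      have htne : t ≠ 0 := ht.ne'
      have hMunit : IsUnit (M t).det := isUnit_iff_ne_zero.mpr hdt
      have hFx : (M t)⁻¹.mulVec x = x - (t^2) • (((M t)⁻¹ * B).mulVec x) := by
        have hFM : (M t)⁻¹ * M t = 1 := Matrix.nonsing_inv_mul _ hMunit
        have hF1 : (M t)⁻¹ - 1 = -((t^2) • ((M t)⁻¹ * B)) := by
          calc (M t)⁻¹ - 1 = (M t)⁻¹ * (1 - M t) := by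
                rw [Matrix.mul_sub, Matrix.mul_one, hFM]
            _ = -((t^2) • ((M t)⁻¹ * B)) := by
                rw [hM]; simp [Matrix.mul_smul]
        have := congrArg (fun N => N.mulVec x) hF1
        simp only [Matrix.sub_mulVec, Matrix.one_mulVec, Matrix.neg_mulVec,
          Matrix.smul_mulVec] at this
        rw [sub_eq_iff_eq_add] at this
        rw [this]; abel
      rw [hkey]
      simp only [Matrix.mulVec_add, Matrix.mulVec_smul, hFx]
      have harr : x - (t^2) • (((M t)⁻¹ * B).mulVec x) + t • ((M t)⁻¹.mulVec f)
            + t • ((M t)⁻¹.mulVec c) - x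
          = t • ((M t)⁻¹.mulVec f) + t • ((M t)⁻¹.mulVec c)
            - (t^2) • (((M t)⁻¹ * B).mulVec x) := by abel
      rw [harr, smul_sub, smul_add, smul_smul, smul_smul, smul_smul,
        inv_mul_cancel₀ htne, one_smul, one_smul]
      have ht2 : t⁻¹ * t^2 = t := by
        rw [sq, ← mul_assoc, inv_mul_cancel₀ htne, one_mul]
      rw [ht2]
    have hlim2 : Tendsto
        (fun t : ℝ => (M t)⁻¹.mulVec (f + c) - t • (((M t)⁻¹ * B).mulVec x))
        (𝓝 0) (𝓝 (f + c)) := by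
      have h1 : Tendsto (fun t => (M t)⁻¹.mulVec (f + c)) (𝓝 (0:ℝ)) (𝓝 (f + c)) := by
        have := hg.continuousAt.tendsto.comp (hFtend.prodMk_nhds
          (tendsto_const_nhds : Tendsto (fun _ : ℝ => f + c) (𝓝 0) (𝓝 (f + c))))
        simpa only [Function.comp_def, Matrix.one_mulVec] using this
      have h2 : Tendsto (fun t : ℝ => t • (((M t)⁻¹ * B).mulVec x)) (𝓝 0) (𝓝 0) := by
        have hmul : Tendsto (fun t => (M t)⁻¹ * B) (𝓝 (0:ℝ)) (𝓝 (1 * B)) :=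
          hFtend.mul tendsto_const_nhds
        have h3 : Tendsto (fun t => ((M t)⁻¹ * B).mulVec x) (𝓝 (0:ℝ)) (𝓝 ((1 * B).mulVec x)) := by
          exact hg.continuousAt.tendsto.comp (hmul.prodMk_nhds
            (tendsto_const_nhds : Tendsto (fun _ : ℝ => x) (𝓝 0) (𝓝 x)))
        have h4 := Tendsto.smul (tendsto_id (α := ℝ)) h3
        simpa only [id_eq, zero_smul] using h4
      have h5 := h1.sub h2
      simpa only [sub_zero] using h5
    have hc' : f + c = f + (G * Gᵀ * Wᵀ).mulVec y := by rw [hc, hA]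
    rw [← hc']
    exact (hlim2.mono_left nhdsWithin_le_nhds).congr' (key2.mono fun t h => h.symm)
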